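/- Let T : E → F be a positive linear operator that is norm bounded, and set M = sup{μ(T(y)) : y ∈ E, ν(y) ≤ 1}, assumed finite. Let S : E^t → F be any positive linear operator with S(y) = T(y) for all y ∈ E. Then sup{μ(S(x)) : x ∈ E^t, ρ(x) ≤ 1} = M. -/

import Mathlib

theorem stmt11
    {G : Type*} [Lattice G] [AddCommGroup G] [Module ℝ G]
    [CovariantClass G G (· + ·) (· ≤ ·)] [PosSMulMono ℝ G]
    (arch : ∀ x y : G, (∀ n : ℕ, n • x ≤ y) → x ≤ 0)
    (E : Set G)
    (hE0 : (0 : G) ∈ E)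
    (hEadd : ∀ x ∈ E, ∀ y ∈ E, x + y ∈ E)
    (hEsmul : ∀ (c : ℝ), ∀ x ∈ E, c • x ∈ E)
    (hEsup : ∀ x ∈ E, ∀ y ∈ E, x ⊔ y ∈ E)
    (hEinf : ∀ x ∈ E, ∀ y ∈ E, x ⊓ y ∈ E)
    (hdense : ∀ x : G, 0 < x → ∃ y ∈ E, 0 < y ∧ y ≤ x)
    (hmaj : ∀ x : G, ∃ y ∈ E, x ≤ y)
    (ν : G → ℝ)
    (hν_zero : ∀ x ∈ E, (ν x = 0 ↔ x = 0))
    (hν_smul : ∀ (c : ℝ), ∀ x ∈ E, ν (c • x) = |c| * ν x)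
    (hν_add : ∀ x ∈ E, ∀ y ∈ E, ν (x + y) ≤ ν x + ν y)
    (hν_mono : ∀ x ∈ E, ∀ y ∈ E, |x| ≤ |y| → ν x ≤ ν y)
    (ρ : G → ℝ)
    (hρ : ∀ x : G, ρ x = sSup (ν '' {z | z ∈ E ∧ 0 ≤ z ∧ z ≤ |x|}))
    (ι : G → ℝ)
    (hι : ∀ x : G, ι x = sInf (ν '' {y | y ∈ E ∧ |x| ≤ y}))
    (Et : Set G)
    (hEEt : E ⊆ Et)
    (hEtadd : ∀ x ∈ Et, ∀ y ∈ Et, x + y ∈ Et)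
    (hEtsmul : ∀ (c : ℝ), ∀ x ∈ Et, c • x ∈ Et)
    (hEtsup : ∀ x ∈ Et, ∀ y ∈ Et, x ⊔ y ∈ Et)
    (hEtinf : ∀ x ∈ Et, ∀ y ∈ Et, x ⊓ y ∈ Et)
    (hEt : ∀ x ∈ Et, ι x = ρ x)
    {F : Type*} [ConditionallyCompleteLattice F] [AddCommGroup F] [Module ℝ F]
    [CovariantClass F F (· + ·) (· ≤ ·)] [PosSMulMono ℝ F]
    (μ : F → ℝ)
    (hμ_zero : ∀ x : F, (μ x = 0 ↔ x = 0))
    (hμ_smul : ∀ (c : ℝ) (x : F), μ (c • x) = |c| * μ x)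
    (hμ_add : ∀ x y : F, μ (x + y) ≤ μ x + μ y)
    (hμ_mono : ∀ x y : F, |x| ≤ |y| → μ x ≤ μ y)
    (T : G → F)
    (hT_add : ∀ x ∈ E, ∀ y ∈ E, T (x + y) = T x + T y)
    (hT_smul : ∀ (c : ℝ), ∀ x ∈ E, T (c • x) = c • T x)
    (hT_pos : ∀ x ∈ E, 0 ≤ x → 0 ≤ T x)
    (M : ℝ)
    (hM : IsLUB {r : ℝ | ∃ y ∈ E, ν y ≤ 1 ∧ r = μ (T y)} M)
    (S : G → F)
    (hS_add : ∀ x ∈ Et, ∀ y ∈ Et, S (x + y) = S x + S y)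
    (hS_smul : ∀ (c : ℝ), ∀ x ∈ Et, S (c • x) = c • S x)
    (hS_pos : ∀ x ∈ Et, 0 ≤ x → 0 ≤ S x)
    (hS_ext : ∀ y ∈ E, S y = T y) :
    IsLUB {r : ℝ | ∃ x ∈ Et, ρ x ≤ 1 ∧ r = μ (S x)} M := by

  -- basic facts
  have hν0 : ν 0 = 0 := (hν_zero 0 hE0).mpr rfl
  have hνneg : ∀ y ∈ E, ν (-y) = ν y := by
    intro y hy
    have h := hν_smul (-1) y hy
    simpa using h
  have hνnn : ∀ y ∈ E, 0 ≤ ν y := by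
    intro y hy
    have hyn : -y ∈ E := by simpa using hEsmul (-1) y hy
    have h := hν_add y hy (-y) hyn
    rw [add_neg_cancel, hν0, hνneg y hy] at h
    linarith
  have hT0 : T 0 = 0 := by
    have h := hT_smul 0 0 hE0
    simpa using h
  have hMnn : 0 ≤ M := by
    have h0 : (0:ℝ) ∈ {r : ℝ | ∃ y ∈ E, ν y ≤ 1 ∧ r = μ (T y)} := by
      refine ⟨0, hE0, by simp [hν0], ?_⟩
      rw [hT0, ((hμ_zero 0).mpr rfl)]
    exact hM.1 h0
  have hρle : ∀ y ∈ E, ρ y ≤ ν y := by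
    intro y hy
    rw [hρ]
    apply Real.sSup_le
    · rintro r ⟨z, ⟨hzE, hz0, hzle⟩, rfl⟩
      exact hν_mono z hzE y hy (by rwa [abs_of_nonneg hz0])
    · exact hνnn y hy
  constructor
  · rintro r ⟨x, hxEt, hρx, rfl⟩
    have key : ∀ ε : ℝ, 0 < ε → μ (S x) ≤ (1 + ε) * M := by
      intro ε hε
      -- find y ∈ E with |x| ≤ y and ν y < 1 + ε
      obtain ⟨y0, hy0E, hxy0⟩ := hmaj |x|
      have hne : (ν '' {y | y ∈ E ∧ |x| ≤ y}).Nonempty := ⟨ν y0, y0, ⟨hy0E, hxy0⟩, rfl⟩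
      obtain ⟨a, ⟨y, ⟨hyE, hxy⟩, rfl⟩, ha⟩ := Real.lt_sInf_add_pos hne hε
      have hινx : ι x = ρ x := hEt x hxEt
      have hνy : ν y < 1 + ε := by
        have h1 : sInf (ν '' {y | y ∈ E ∧ |x| ≤ y}) = ρ x := by rw [← hι x, hινx]
        rw [h1] at ha
        linarith
      -- positivity chain : |S x| ≤ S y = T y
      have hyEt := hEEt hyE
      have hxle : x ≤ y := le_trans (le_abs_self x) hxy
      have hd : (0:G) ≤ y - x := sub_nonneg.mpr hxle
      have hdEt : y - x ∈ Et := by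
        have h := hEtadd y hyEt _ (hEtsmul (-1) x hxEt)
        simpa [sub_eq_add_neg] using h
      have hSyx : S y = S (y - x) + S x := by
        have h := hS_add (y - x) hdEt x hxEt
        rwa [sub_add_cancel] at h
      have hSxSy : S x ≤ S y := by
        calc S x = 0 + S x := (zero_add _).symm
        _ ≤ S (y - x) + S x := add_le_add_left (hS_pos _ hdEt hd) _
        _ = S y := hSyx.symm
      have hxy2 : (0:G) ≤ x + y := by
        have h1 : -y ≤ x := by
          have h3 : -|x| ≤ x := by simpa using neg_le_neg_iff.mpr (neg_le_abs x)
          exact le_trans (neg_le_neg_iff.mpr hxy) h3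
        calc (0:G) = -y + y := (neg_add_cancel y).symm
        _ ≤ x + y := add_le_add_left h1 y
      have hSsum : 0 ≤ S x + S y := by
        have h := hS_pos _ (hEtadd x hxEt y hyEt) hxy2
        rwa [hS_add x hxEt y hyEt] at h
      have hnSy : -S y ≤ S x := by
        have h := add_le_add_right hSsum (-S y)
        simpa using h
      have hSynn : 0 ≤ S y := hS_pos y hyEt (le_trans (abs_nonneg x) hxy)
      have habs : |S x| ≤ |S y| := by
        rw [abs_of_nonneg hSynn]
        exact abs_le'.mpr ⟨hSxSy, neg_le.mp hnSy⟩
      have hμSx : μ (S x) ≤ μ (T y) := by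
        rw [← hS_ext y hyE]
        exact hμ_mono _ _ habs
      -- scale y to unit ball
      set c : ℝ := (1 + ε)⁻¹ with hc
      have hcpos : 0 < c := by positivity
      have hy'E : c • y ∈ E := hEsmul c y hyE
      have hνy' : ν (c • y) ≤ 1 := by
        rw [hν_smul c y hyE, abs_of_pos hcpos]
        rw [hc, inv_mul_le_iff₀ (by linarith), mul_one]
        linarith
      have hMem : μ (T (c • y)) ∈ {r : ℝ | ∃ y ∈ E, ν y ≤ 1 ∧ r = μ (T y)} :=
        ⟨c • y, hy'E, hνy', rfl⟩
      have hle : μ (T (c • y)) ≤ M := hM.1 hMem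
      have hTy' : μ (T (c • y)) = c * μ (T y) := by
        rw [hT_smul c y hyE, hμ_smul, abs_of_pos hcpos]
      have hμTy : μ (T y) ≤ (1 + ε) * M := by
        rw [hTy'] at hle
        have h := mul_le_mul_of_nonneg_left hle (le_of_lt (show (0:ℝ) < 1 + ε by linarith))
        rw [← mul_assoc, hc, mul_inv_cancel₀ (by linarith), one_mul] at h
        exact h
      linarith
    by_contra hcon
    push_neg at hcon
    have hd : 0 < μ (S x) - M := by linarith
    have hε : 0 < (μ (S x) - M) / (2 * (M + 1)) := by positivity
    have h := key _ hε
    have h2 : (μ (S x) - M) / (2 * (M + 1)) * M ≤ (μ (S x) - M) / 2 := by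
      rw [div_mul_eq_mul_div, div_le_div_iff₀ (by positivity) (by norm_num)]
      nlinarith
    nlinarith
  · intro b hb
    apply hM.2
    rintro r ⟨y, hyE, hνy, rfl⟩
    apply hb
    exact ⟨y, hEEt hyE, le_trans (hρle y hyE) hνy, by rw [hS_ext y hyE]⟩
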